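/- Soundness of the fork-join (par) rule: let n ≥ 1, let pts, pts₁,…,ptsₙ be points-to types, and let F₁,…,Fₙ : (Var → Val) → (Var → Val) be state transformers such that for every i and every environment δ, if δ satisfies ∇((pts,1/n),((ptsⱼ)_{j≠i},1/n each)) — the combination with weight 1/n on pts and weight 1/n on each ptsⱼ with j ≠ i — then Fᵢ δ satisfies ptsᵢ. Then for every permutation θ of {1,…,n} and every environment γ with γ ⊨ pts, the environment (F_{θ(n)} ∘ ⋯ ∘ F_{θ(1)}) γ satisfies ∇((pts₁,1/n),…,(ptsₙ,1/n)). -/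

import Mathlib

/-- A points-to type: probabilities are nonnegative and each row sums to at most 1. -/
def IsPTS {Var : Type*} [Fintype Var] (pts : Var → Var → ℝ) : Prop :=
  (∀ x z, 0 ≤ pts x z) ∧ ∀ x, ∑ z, pts x z ≤ 1

/-- An environment γ satisfies a points-to type pts iff every variable holding a
symbolic address holds it with positive probability according to pts. -/
def Sat {Var : Type*} (γ : Var → ℤ ⊕ Var) (pts : Var → Var → ℝ) : Prop :=
  ∀ x z, γ x = Sum.inr z → 0 < pts x z

theorem stmt13 {Var : Type*} [Fintype Var] [DecidableEq Var] {n : ℕ} (hn : 1 ≤ n)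
    (pts : Var → Var → ℝ) (hpts : IsPTS pts)
    (ptsF : Fin n → Var → Var → ℝ) (hptsF : ∀ i, IsPTS (ptsF i))
    (F : Fin n → (Var → ℤ ⊕ Var) → (Var → ℤ ⊕ Var))
    -- premise of the rule (par^{prob}):
    -- Sᵢ : ∇{(pts,1/n),(ptsⱼ,1/n) | j ≠ i} → ptsᵢ
    (hF : ∀ i : Fin n, ∀ δ : Var → ℤ ⊕ Var,
      Sat δ (fun x z => (1 / (n : ℝ)) * pts x z +
        ∑ j ∈ Finset.univ.erase i, (1 / (n : ℝ)) * ptsF j x z) →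
      Sat (F i δ) (ptsF i)) :
    ∀ θ : Equiv.Perm (Fin n), ∀ γ : Var → ℤ ⊕ Var, Sat γ pts →
      Sat ((List.ofFn fun i : Fin n => F (θ i)).foldl (fun δ g => g δ) γ)
        (fun x z => ∑ i, (1 / (n : ℝ)) * ptsF i x z) := by
  intro θ γ hγ
  have hn0 : (0:ℝ) < 1 / n := by
    have : (0:ℝ) < n := by exact_mod_cast hn
    positivity
  -- main induction: applying a nodup list of threads preserves "satisfies some ptsF"
  have main : ∀ l : List (Fin n), l.Nodup → ∀ i (δ : Var → ℤ ⊕ Var), i ∉ l →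
      Sat δ (ptsF i) →
      ∃ j, Sat (List.foldl (fun δ j => F j δ) δ l) (ptsF j) := by
    intro l
    induction l with
    | nil => exact fun _ i δ _ h => ⟨i, h⟩
    | cons a t ih =>
      intro hnd i δ hmem hδ
      simp only [List.foldl_cons]
      refine ih (List.Nodup.of_cons hnd) a (F a δ)
        ((List.nodup_cons.mp hnd).1) ?_
      apply hF a
      intro x z hx
      have hia : i ≠ a := fun h => hmem (h ▸ (List.mem_cons_self (a := a) (l := t)))
      have hi : i ∈ Finset.univ.erase a :=
        Finset.mem_erase.mpr ⟨hia, Finset.mem_univ i⟩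
      have hsum : 0 < ∑ j ∈ Finset.univ.erase a, (1/(n:ℝ)) * ptsF j x z :=
        Finset.sum_pos'
          (fun j _ => mul_nonneg hn0.le ((hptsF j).1 x z))
          ⟨i, hi, mul_pos hn0 (hδ x z hx)⟩
      have hp : 0 ≤ (1/(n:ℝ)) * pts x z := mul_nonneg hn0.le (hpts.1 x z)
      linarith
  have heq : (List.ofFn fun i : Fin n => F (θ i)).foldl (fun δ g => g δ) γ
      = ((List.finRange n).map θ).foldl (fun δ j => F j δ) γ := by
    rw [List.ofFn_eq_map, List.foldl_map, List.foldl_map]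
  have hnodup : ((List.finRange n).map θ).Nodup :=
    (List.nodup_finRange n).map θ.injective
  have hne : ((List.finRange n).map θ) ≠ [] := by
    simp only [ne_eq, List.map_eq_nil_iff, List.finRange_eq_nil_iff]
    omega
  obtain ⟨a, t, hL⟩ := List.exists_cons_of_ne_nil hne
  rw [heq, hL]
  rw [hL] at hnodup
  have hδ1 : Sat (F a γ) (ptsF a) := by
    apply hF a
    intro x z hx
    have hp : 0 < (1/(n:ℝ)) * pts x z := mul_pos hn0 (hγ x z hx)
    have hs : 0 ≤ ∑ j ∈ Finset.univ.erase a, (1/(n:ℝ)) * ptsF j x z :=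
      Finset.sum_nonneg fun j _ => mul_nonneg hn0.le ((hptsF j).1 x z)
    linarith
  simp only [List.foldl_cons]
  obtain ⟨j, hj⟩ := main t (List.Nodup.of_cons hnodup) a (F a γ)
    (List.nodup_cons.mp hnodup).1 hδ1
  intro x z hx
  exact Finset.sum_pos'
    (fun k _ => mul_nonneg hn0.le ((hptsF k).1 x z))
    ⟨j, Finset.mem_univ j, mul_pos hn0 (hj x z hx)⟩
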